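/- In ℚ^10, let U_1 be the span of the all-ones vector 𝟙 = (1,...,1); let U_4 be the span of v_2 - v_1, v_3 - v_1, v_4 - v_1, v_5 - v_1, where v_1 = (1,0,0,0,1,1,0,0,1,0), v_2 = (1,1,0,0,0,0,1,0,0,1), v_3 = (0,1,1,0,0,1,0,1,0,0), v_4 = (0,0,1,1,0,0,1,0,1,0), v_5 = (0,0,0,1,1,0,0,1,0,1); and let U_5 be the span of w_1 = (1,-1,1,-1,1,-1,1,1,-1,-1), w_2 = (1,1,-1,1,-1,-1,-1,1,1,-1), w_3 = (-1,1,1,-1,1,-1,-1,-1,1,1), w_4 = (1,-1,1,1,-1,1,-1,-1,-1,1), w_5 = (-1,1,-1,1,1,1,1,-1,-1,-1), w_6 = (-1,-1,-1,-1,-1,1,1,1,1,1). Then U_1, U_4, U_5 have dimensions 1, 4, 5 respectively, are pairwise orthogonal with respect to the standard bilinear form on ℚ^10, each is invariant under the coordinate-permutation action of each of α = (1 5)(2 8)(4 7), σ = (2 5 7 6 10 9)(3 8 4), and φ = (1 2 3 4 5)(6 7 8 9 10), and ℚ^10 is the internal direct sum U_1 ⊕ U_4 ⊕ U_5. In particular,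 the orthogonal complement of 𝟙 equals U_4 ⊕ U_5 and is a reducible invariant subspace of this permutation representation. -/

import Mathlib

/-- The fan vectors `v_1, …, v_5` in `ℚ^10`. -/
def fanVec : Fin 5 → (Fin 10 → ℚ)
  | 0 => ![1, 0, 0, 0, 1, 1, 0, 0, 1, 0]
  | 1 => ![1, 1, 0, 0, 0, 0, 1, 0, 0, 1]
  | 2 => ![0, 1, 1, 0, 0, 1, 0, 1, 0, 0]
  | 3 => ![0, 0, 1, 1, 0, 0, 1, 0, 1, 0]
  | 4 => ![0, 0, 0, 1, 1, 0, 0, 1, 0, 1]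

/-- The Hamiltonian-cycle vectors `w_1, …, w_6` in `ℚ^10`. -/
def hamVec : Fin 6 → (Fin 10 → ℚ)
  | 0 => ![1, -1, 1, -1, 1, -1, 1, 1, -1, -1]
  | 1 => ![1, 1, -1, 1, -1, -1, -1, 1, 1, -1]
  | 2 => ![-1, 1, 1, -1, 1, -1, -1, -1, 1, 1]
  | 3 => ![1, -1, 1, 1, -1, 1, -1, -1, -1, 1]
  | 4 => ![-1, 1, -1, 1, 1, 1, 1, -1, -1, -1]
  | 5 => ![-1, -1, -1, -1, -1, 1, 1, 1, 1, 1]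

/-- `U_1`: the span of the all-ones vector. -/
def U1 : Submodule ℚ (Fin 10 → ℚ) := Submodule.span ℚ {fun _ => (1 : ℚ)}

/-- `U_4`: the span of `v_2 - v_1, v_3 - v_1, v_4 - v_1, v_5 - v_1`. -/
def U4 : Submodule ℚ (Fin 10 → ℚ) :=
  Submodule.span ℚ {fanVec 1 - fanVec 0, fanVec 2 - fanVec 0,
    fanVec 3 - fanVec 0, fanVec 4 - fanVec 0}

/-- `U_5`: the span of the Hamiltonian-cycle vectors. -/
def U5 : Submodule ℚ (Fin 10 → ℚ) := Submodule.span ℚ (Set.range hamVec)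

/-- The permutation `α = (1 5)(2 8)(4 7)` of `{1,…,10}`, on `Fin 10`
(symbol `i` corresponds to index `i-1`). -/
def permAlpha : Equiv.Perm (Fin 10) := Equiv.swap 0 4 * Equiv.swap 1 7 * Equiv.swap 3 6

/-- The permutation `σ = (2 5 7 6 10 9)(3 8 4)` of `{1,…,10}`, on `Fin 10`. -/
def permSigma : Equiv.Perm (Fin 10) :=
  List.formPerm [(1 : Fin 10), 4, 6, 5, 9, 8] * List.formPerm [(2 : Fin 10), 7, 3]

/-- The permutation `φ = (1 2 3 4 5)(6 7 8 9 10)` of `{1,…,10}`, on `Fin 10`. -/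
def permPhi : Equiv.Perm (Fin 10) :=
  List.formPerm [(0 : Fin 10), 1, 2, 3, 4] * List.formPerm [(5 : Fin 10), 6, 7, 8, 9]

/-! ### Auxiliary definitions and lemmas -/

/-- A basis family for `ℚ^10`. -/
def eV : Fin 10 → (Fin 10 → ℚ) :=
  ![(fun _ => 1), fanVec 1 - fanVec 0, fanVec 2 - fanVec 0, fanVec 3 - fanVec 0,
    fanVec 4 - fanVec 0, hamVec 0, hamVec 1, hamVec 2, hamVec 3, hamVec 4]

set_option maxHeartbeats 1000000 in
theorem eV_indep : LinearIndependent ℚ eV := by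
  rw [Fintype.linearIndependent_iff]
  intro c h
  rw [funext_iff] at h
  simp only [Fin.forall_fin_succ, IsEmpty.forall_iff, and_true, Finset.sum_apply,
    Fin.sum_univ_succ, Finset.univ_eq_empty, Finset.sum_empty, Pi.smul_apply, smul_eq_mul,
    Pi.zero_apply, eV, fanVec, hamVec, Pi.sub_apply, Matrix.cons_val_zero, Matrix.cons_val_succ,
    add_zero] at h ⊢
  obtain ⟨h0, h1, h2, h3, h4, h5, h6, h7, h8, h9⟩ := h
  refine ⟨?_, ?_, ?_, ?_, ?_, ?_, ?_, ?_, ?_, ?_⟩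
  · linear_combination (1/10 : ℚ) * h0 + (1/10 : ℚ) * h1 + (1/10 : ℚ) * h2 + (1/10 : ℚ) * h3 + (1/10 : ℚ) * h4 + (1/10 : ℚ) * h5 + (1/10 : ℚ) * h6 + (1/10 : ℚ) * h7 + (1/10 : ℚ) * h8 + (1/10 : ℚ) * h9
  · linear_combination (1/5 : ℚ) * h0 + (1/5 : ℚ) * h1 + (-2/15 : ℚ) * h2 + (-2/15 : ℚ) * h3 + (-2/15 : ℚ) * h4 + (-2/15 : ℚ) * h5 + (1/5 : ℚ) * h6 + (-2/15 : ℚ) * h7 + (-2/15 : ℚ) * h8 + (1/5 : ℚ) * h9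
  · linear_combination (-2/15 : ℚ) * h0 + (1/5 : ℚ) * h1 + (1/5 : ℚ) * h2 + (-2/15 : ℚ) * h3 + (-2/15 : ℚ) * h4 + (1/5 : ℚ) * h5 + (-2/15 : ℚ) * h6 + (1/5 : ℚ) * h7 + (-2/15 : ℚ) * h8 + (-2/15 : ℚ) * h9
  · linear_combination (-2/15 : ℚ) * h0 + (-2/15 : ℚ) * h1 + (1/5 : ℚ) * h2 + (1/5 : ℚ) * h3 + (-2/15 : ℚ) * h4 + (-2/15 : ℚ) * h5 + (1/5 : ℚ) * h6 + (-2/15 : ℚ) * h7 + (1/5 : ℚ) * h8 + (-2/15 : ℚ) * h9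
  · linear_combination (-2/15 : ℚ) * h0 + (-2/15 : ℚ) * h1 + (-2/15 : ℚ) * h2 + (1/5 : ℚ) * h3 + (1/5 : ℚ) * h4 + (-2/15 : ℚ) * h5 + (-2/15 : ℚ) * h6 + (1/5 : ℚ) * h7 + (-2/15 : ℚ) * h8 + (1/5 : ℚ) * h9
  · linear_combination (1/6 : ℚ) * h0 + (1/6 : ℚ) * h2 + (1/6 : ℚ) * h4 + (-1/6 : ℚ) * h5 + (-1/6 : ℚ) * h8 + (-1/6 : ℚ) * h9
  · linear_combination (1/6 : ℚ) * h0 + (1/6 : ℚ) * h1 + (1/6 : ℚ) * h3 + (-1/6 : ℚ) * h5 + (-1/6 : ℚ) * h6 + (-1/6 : ℚ) * h9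
  · linear_combination (1/6 : ℚ) * h1 + (1/6 : ℚ) * h2 + (1/6 : ℚ) * h4 + (-1/6 : ℚ) * h5 + (-1/6 : ℚ) * h6 + (-1/6 : ℚ) * h7
  · linear_combination (1/6 : ℚ) * h0 + (1/6 : ℚ) * h2 + (1/6 : ℚ) * h3 + (-1/6 : ℚ) * h6 + (-1/6 : ℚ) * h7 + (-1/6 : ℚ) * h8
  · linear_combination (1/6 : ℚ) * h1 + (1/6 : ℚ) * h3 + (1/6 : ℚ) * h4 + (-1/6 : ℚ) * h7 + (-1/6 : ℚ) * h8 + (-1/6 : ℚ) * h9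

theorem eV_span : Submodule.span ℚ (Set.range eV) = ⊤ :=
  LinearIndependent.span_eq_top_of_card_eq_finrank eV_indep (by simp)

theorem genU4 : ∀ a : Fin 5, fanVec a - fanVec 0 ∈ U4 := by
  intro a
  fin_cases a
  · exact sub_self (fanVec 0) ▸ Submodule.zero_mem U4
  · exact Submodule.subset_span (Set.mem_insert _ _)
  · exact Submodule.subset_span (Set.mem_insert_iff.2 (Or.inr (Set.mem_insert _ _)))
  · exact Submodule.subset_span
      (Set.mem_insert_iff.2 (Or.inr (Set.mem_insert_iff.2 (Or.inr (Set.mem_insert _ _)))))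
  · exact Submodule.subset_span
      (Set.mem_insert_iff.2 (Or.inr (Set.mem_insert_iff.2 (Or.inr
        (Set.mem_insert_iff.2 (Or.inr rfl))))))

theorem U4diff (a b : Fin 5) : fanVec a - fanVec b ∈ U4 := by
  have h : fanVec a - fanVec b = (fanVec a - fanVec 0) - (fanVec b - fanVec 0) := by abel
  rw [h]
  exact sub_mem (genU4 a) (genU4 b)

theorem hamMem (j : Fin 6) : hamVec j ∈ U5 := Submodule.subset_span ⟨j, rfl⟩

theorem ham5_eq : hamVec 5 = -hamVec 0 - hamVec 1 - hamVec 2 - hamVec 3 - hamVec 4 := by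
  rw [funext_iff]
  simp only [Fin.forall_fin_succ, IsEmpty.forall_iff, and_true, hamVec, Pi.sub_apply,
    Pi.neg_apply, Matrix.cons_val_zero, Matrix.cons_val_succ]
  norm_num

theorem sumsq_eq_zero {x : Fin 10 → ℚ} (h : (∑ k : Fin 10, x k * x k) = 0) : x = 0 := by
  funext k
  have h2 := (Finset.sum_eq_zero_iff_of_nonneg
    (fun i _ => mul_self_nonneg (x i))).1 h k (Finset.mem_univ k)
  exact mul_self_eq_zero.1 h2

theorem ortho_span {s t : Set (Fin 10 → ℚ)}
    (h : ∀ x ∈ s, ∀ y ∈ t, (∑ k : Fin 10, x k * y k) = 0) :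
    ∀ x ∈ Submodule.span ℚ s, ∀ y ∈ Submodule.span ℚ t,
      (∑ k : Fin 10, x k * y k) = 0 := by
  have step : ∀ x : Fin 10 → ℚ, (∀ y ∈ t, (∑ k : Fin 10, x k * y k) = 0) →
      ∀ y ∈ Submodule.span ℚ t, (∑ k : Fin 10, x k * y k) = 0 := by
    intro x hx y hy
    induction hy using Submodule.span_induction with
    | mem v hv => exact hx v hv
    | zero => simp
    | add u v _ _ hu hv =>
        simp only [Pi.add_apply, mul_add, Finset.sum_add_distrib, hu, hv, add_zero]
    | smul a u _ hu =>
        simp only [Pi.smul_apply, smul_eq_mul, mul_left_comm]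
        rw [← Finset.mul_sum, hu, mul_zero]
  intro x hx
  induction hx using Submodule.span_induction with
  | mem v hv => exact step v (h v hv)
  | zero => intro y hy; simp
  | add u v _ _ hu hv =>
      intro y hy
      simp only [Pi.add_apply, add_mul, Finset.sum_add_distrib, hu y hy, hv y hy, add_zero]
  | smul a u _ hu =>
      intro y hy
      simp only [Pi.smul_apply, smul_eq_mul, mul_assoc]
      rw [← Finset.mul_sum, hu y hy, mul_zero]

theorem ortho14 : ∀ x ∈ U1, ∀ y ∈ U4, (∑ k : Fin 10, x k * y k) = 0 := by
  apply ortho_span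
  rintro x rfl y hy
  rcases hy with rfl | rfl | rfl | rfl <;> norm_num [fanVec, Fin.sum_univ_succ]

theorem ortho15 : ∀ x ∈ U1, ∀ y ∈ U5, (∑ k : Fin 10, x k * y k) = 0 := by
  apply ortho_span
  rintro x rfl y ⟨j, rfl⟩
  fin_cases j <;> norm_num [hamVec, Fin.sum_univ_succ]

theorem ortho45 : ∀ x ∈ U4, ∀ y ∈ U5, (∑ k : Fin 10, x k * y k) = 0 := by
  apply ortho_span
  rintro x hx y ⟨j, rfl⟩
  rcases hx with rfl | rfl | rfl | rfl <;> fin_cases j <;>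
    norm_num [fanVec, hamVec, Fin.sum_univ_succ]

theorem inv_span (g : Equiv.Perm (Fin 10)) (s : Set (Fin 10 → ℚ))
    (h : ∀ v ∈ s, (fun i => v (g⁻¹ i)) ∈ Submodule.span ℚ s) :
    ∀ x ∈ Submodule.span ℚ s, (fun i => x (g⁻¹ i)) ∈ Submodule.span ℚ s := by
  intro x hx
  induction hx using Submodule.span_induction with
  | mem v hv => exact h v hv
  | zero => exact Submodule.zero_mem _
  | add u v _ _ hu hv => exact Submodule.add_mem _ hu hv
  | smul a u _ hu => exact Submodule.smul_mem _ a hu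

theorem inv_U1 (g : Equiv.Perm (Fin 10)) : ∀ x ∈ U1, (fun i => x (g⁻¹ i)) ∈ U1 := by
  apply inv_span
  rintro v rfl
  exact Submodule.subset_span rfl

theorem inv_U4 (g : Equiv.Perm (Fin 10)) (p : Fin 5 → Fin 5)
    (hg : ∀ a : Fin 5, ∀ i : Fin 10, fanVec a (g⁻¹ i) = fanVec (p a) i) :
    ∀ x ∈ U4, (fun i => x (g⁻¹ i)) ∈ U4 := by
  apply inv_span
  intro v hv
  have key : ∀ a : Fin 5, (fun i => (fanVec a - fanVec 0) (g⁻¹ i)) ∈ U4 := by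
    intro a
    have h2 : (fun i => (fanVec a - fanVec 0) (g⁻¹ i)) = fanVec (p a) - fanVec (p 0) := by
      funext i
      simp only [Pi.sub_apply, hg]
    rw [h2]
    exact U4diff _ _
  rcases hv with rfl | rfl | rfl | rfl
  · exact key 1
  · exact key 2
  · exact key 3
  · exact key 4

theorem inv_U5 (g : Equiv.Perm (Fin 10)) (tgt : Fin 6 → (Fin 10 → ℚ))
    (hg : ∀ j : Fin 6, ∀ i : Fin 10, hamVec j (g⁻¹ i) = tgt j i)
    (htgt : ∀ j : Fin 6, tgt j ∈ U5) :
    ∀ x ∈ U5, (fun i => x (g⁻¹ i)) ∈ U5 := by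
  apply inv_span
  rintro v ⟨j, rfl⟩
  have h2 : (fun i => hamVec j (g⁻¹ i)) = tgt j := funext (hg j)
  rw [h2]
  exact htgt j

theorem fan_alpha : ∀ a : Fin 5, ∀ i : Fin 10,
    fanVec a (permAlpha⁻¹ i) = fanVec (![0, 4, 2, 3, 1] a) i := by decide

theorem fan_sigma : ∀ a : Fin 5, ∀ i : Fin 10,
    fanVec a (permSigma⁻¹ i) = fanVec (![1, 0, 4, 2, 3] a) i := by decide

theorem fan_phi : ∀ a : Fin 5, ∀ i : Fin 10,
    fanVec a (permPhi⁻¹ i) = fanVec (![1, 2, 3, 4, 0] a) i := by decide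

theorem ham_alpha : ∀ j : Fin 6, ∀ i : Fin 10,
    hamVec j (permAlpha⁻¹ i) = (-hamVec (![5, 3, 4, 1, 2, 0] j)) i := by decide

theorem ham_sigma : ∀ j : Fin 6, ∀ i : Fin 10,
    hamVec j (permSigma⁻¹ i) = (-hamVec (![2, 5, 3, 4, 1, 0] j)) i := by decide

theorem ham_phi : ∀ j : Fin 6, ∀ i : Fin 10,
    hamVec j (permPhi⁻¹ i) = hamVec (![1, 2, 3, 4, 0, 5] j) i := by decide

/-- The span of all basis vectors lands in `U1 ⊔ (U4 ⊔ U5)`. -/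
theorem hsup : U1 ⊔ (U4 ⊔ U5) = ⊤ := by
  rw [eq_top_iff, ← eV_span]
  apply Submodule.span_le.2
  rintro _ ⟨i, rfl⟩
  fin_cases i
  · exact Submodule.mem_sup_left (Submodule.subset_span rfl)
  · exact Submodule.mem_sup_right (Submodule.mem_sup_left (genU4 1))
  · exact Submodule.mem_sup_right (Submodule.mem_sup_left (genU4 2))
  · exact Submodule.mem_sup_right (Submodule.mem_sup_left (genU4 3))
  · exact Submodule.mem_sup_right (Submodule.mem_sup_left (genU4 4))
  · exact Submodule.mem_sup_right (Submodule.mem_sup_right (hamMem 0))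
  · exact Submodule.mem_sup_right (Submodule.mem_sup_right (hamMem 1))
  · exact Submodule.mem_sup_right (Submodule.mem_sup_right (hamMem 2))
  · exact Submodule.mem_sup_right (Submodule.mem_sup_right (hamMem 3))
  · exact Submodule.mem_sup_right (Submodule.mem_sup_right (hamMem 4))

theorem sum45 : ∀ z ∈ U4 ⊔ U5, (∑ k : Fin 10, z k) = 0 := by
  intro z hz
  obtain ⟨u, hu, v, hv, rfl⟩ := Submodule.mem_sup.1 hz
  have h1 : (∑ k : Fin 10, u k) = 0 := by
    have := ortho14 (fun _ => 1) (Submodule.subset_span rfl) u hu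
    simpa using this
  have h2 : (∑ k : Fin 10, v k) = 0 := by
    have := ortho15 (fun _ => 1) (Submodule.subset_span rfl) v hv
    simpa using this
  simp only [Pi.add_apply, Finset.sum_add_distrib, h1, h2, add_zero]

/-- `U_1, U_4, U_5` have dimensions `1, 4, 5`, are pairwise orthogonal for the standard
bilinear form `⟨x,y⟩ = Σ_k x_k y_k`, each is invariant under the coordinate-permutation
action `(g • x) i = x (g⁻¹ i)` of each of `α, σ, φ`, and `ℚ^10` is the internal direct
sum `U_1 ⊕ U_4 ⊕ U_5`. In particular the orthogonal complement of the all-ones vector,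
`{x : Σ_k x_k = 0}`, equals `U_4 ⊔ U_5` (a reducible invariant subspace). -/
theorem stmt13 :
    Module.finrank ℚ U1 = 1 ∧ Module.finrank ℚ U4 = 4 ∧ Module.finrank ℚ U5 = 5 ∧
    (∀ x ∈ U1, ∀ y ∈ U4, (∑ k : Fin 10, x k * y k) = 0) ∧
    (∀ x ∈ U1, ∀ y ∈ U5, (∑ k : Fin 10, x k * y k) = 0) ∧
    (∀ x ∈ U4, ∀ y ∈ U5, (∑ k : Fin 10, x k * y k) = 0) ∧
    (∀ g ∈ ({permAlpha, permSigma, permPhi} : Set (Equiv.Perm (Fin 10))),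
      ∀ U ∈ ({U1, U4, U5} : Set (Submodule ℚ (Fin 10 → ℚ))),
        ∀ x ∈ U, (fun i => x (g⁻¹ i)) ∈ U) ∧
    DirectSum.IsInternal ![U1, U4, U5] ∧
    (∀ x : Fin 10 → ℚ, (∑ k : Fin 10, x k) = 0 ↔ x ∈ U4 ⊔ U5) := by
  -- dimension of U1
  have hr1 : Module.finrank ℚ U1 = 1 := by
    have hne : (fun _ => (1 : ℚ)) ≠ (0 : Fin 10 → ℚ) := by
      intro h
      simpa using congrFun h 0
    exact finrank_span_singleton hne
  -- dimension of U4
  have hr4 : Module.finrank ℚ U4 = 4 := by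
    set f : Fin 4 → Fin 10 := ![1, 2, 3, 4] with hf
    have hinj : Function.Injective f := by decide
    have hind : LinearIndependent ℚ (eV ∘ f) := eV_indep.comp f hinj
    have hEq : U4 = Submodule.span ℚ (Set.range (eV ∘ f)) := by
      apply le_antisymm
      · apply Submodule.span_le.2
        rintro x (rfl | rfl | rfl | rfl)
        · exact Submodule.subset_span ⟨0, rfl⟩
        · exact Submodule.subset_span ⟨1, rfl⟩
        · exact Submodule.subset_span ⟨2, rfl⟩
        · exact Submodule.subset_span ⟨3, rfl⟩
      · apply Submodule.span_le.2
        rintro _ ⟨i, rfl⟩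
        fin_cases i
        · exact genU4 1
        · exact genU4 2
        · exact genU4 3
        · exact genU4 4
    rw [hEq, finrank_span_eq_card hind]
    simp
  -- dimension of U5
  have hr5 : Module.finrank ℚ U5 = 5 := by
    set f : Fin 5 → Fin 10 := ![5, 6, 7, 8, 9] with hf
    have hinj : Function.Injective f := by decide
    have hind : LinearIndependent ℚ (eV ∘ f) := eV_indep.comp f hinj
    have hEq : U5 = Submodule.span ℚ (Set.range (eV ∘ f)) := by
      apply le_antisymm
      · apply Submodule.span_le.2
        rintro _ ⟨j, rfl⟩
        fin_cases j
        · exact Submodule.subset_span ⟨0, rfl⟩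
        · exact Submodule.subset_span ⟨1, rfl⟩
        · exact Submodule.subset_span ⟨2, rfl⟩
        · exact Submodule.subset_span ⟨3, rfl⟩
        · exact Submodule.subset_span ⟨4, rfl⟩
        · show hamVec 5 ∈ Submodule.span ℚ (Set.range (eV ∘ f))
          rw [ham5_eq]
          have m : ∀ j : Fin 5, (eV ∘ f) j ∈ Submodule.span ℚ (Set.range (eV ∘ f)) :=
            fun j => Submodule.subset_span ⟨j, rfl⟩
          exact sub_mem (sub_mem (sub_mem (sub_mem (neg_mem (m 0)) (m 1)) (m 2)) (m 3)) (m 4)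
      · apply Submodule.span_le.2
        rintro _ ⟨i, rfl⟩
        fin_cases i
        · exact hamMem 0
        · exact hamMem 1
        · exact hamMem 2
        · exact hamMem 3
        · exact hamMem 4
    rw [hEq, finrank_span_eq_card hind]
    simp
  -- disjointness helpers
  have flip14 : ∀ x ∈ U4, ∀ y ∈ U1, (∑ k : Fin 10, x k * y k) = 0 := by
    intro x hx y hy
    have := ortho14 y hy x hx
    simpa [mul_comm] using this
  have flip15 : ∀ x ∈ U5, ∀ y ∈ U1, (∑ k : Fin 10, x k * y k) = 0 := by
    intro x hx y hy
    have := ortho15 y hy x hx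
    simpa [mul_comm] using this
  have flip45 : ∀ x ∈ U5, ∀ y ∈ U4, (∑ k : Fin 10, x k * y k) = 0 := by
    intro x hx y hy
    have := ortho45 y hy x hx
    simpa [mul_comm] using this
  have key_disj : ∀ (A B C : Submodule ℚ (Fin 10 → ℚ)),
      (∀ x ∈ A, ∀ y ∈ B, (∑ k : Fin 10, x k * y k) = 0) →
      (∀ x ∈ A, ∀ y ∈ C, (∑ k : Fin 10, x k * y k) = 0) →
      Disjoint A (B ⊔ C) := by
    intro A B C hAB hAC
    rw [Submodule.disjoint_def]
    intro x hxA hxBC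
    obtain ⟨y, hy, z, hz, hyz⟩ := Submodule.mem_sup.1 hxBC
    have hsum : (∑ k : Fin 10, x k * x k) = 0 := by
      have expand : (∑ k : Fin 10, x k * x k)
          = (∑ k : Fin 10, x k * y k) + (∑ k : Fin 10, x k * z k) := by
        rw [← Finset.sum_add_distrib]
        apply Finset.sum_congr rfl
        intro k _
        rw [← mul_add]
        congr 1
        rw [← hyz]
        rfl
      rw [expand, hAB x hxA y hy, hAC x hxA z hz, add_zero]
    exact sumsq_eq_zero hsum
  constructor
  · exact hr1
  constructor
  · exact hr4
  constructor
  · exact hr5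
  constructor
  · exact ortho14
  constructor
  · exact ortho15
  constructor
  · exact ortho45
  constructor
  · -- invariance
    intro g hgmem U hUmem x hx
    have hU5alpha := inv_U5 permAlpha (fun j => -hamVec (![5, 3, 4, 1, 2, 0] j)) ham_alpha
      (fun j => neg_mem (hamMem _))
    have hU5sigma := inv_U5 permSigma (fun j => -hamVec (![2, 5, 3, 4, 1, 0] j)) ham_sigma
      (fun j => neg_mem (hamMem _))
    have hU5phi := inv_U5 permPhi (fun j => hamVec (![1, 2, 3, 4, 0, 5] j)) ham_phi
      (fun j => hamMem _)
    rcases hgmem with rfl | rfl | rfl <;> rcases hUmem with rfl | rfl | rfl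
    · exact inv_U1 _ x hx
    · exact inv_U4 _ _ fan_alpha x hx
    · exact hU5alpha x hx
    · exact inv_U1 _ x hx
    · exact inv_U4 _ _ fan_sigma x hx
    · exact hU5sigma x hx
    · exact inv_U1 _ x hx
    · exact inv_U4 _ _ fan_phi x hx
    · exact hU5phi x hx
  constructor
  · -- internal direct sum
    rw [DirectSum.isInternal_submodule_iff_iSupIndep_and_iSup_eq_top]
    constructor
    · rw [iSupIndep_def]
      intro i
      fin_cases i
      · have hle : (⨆ j, ⨆ (_ : j ≠ (0 : Fin 3)), ![U1, U4, U5] j) ≤ U4 ⊔ U5 := by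
          apply iSup_le; intro j; apply iSup_le; intro hj
          fin_cases j
          · exact absurd rfl hj
          · exact le_sup_left
          · exact le_sup_right
        exact (key_disj U1 U4 U5 ortho14 ortho15).mono_right hle
      · have hle : (⨆ j, ⨆ (_ : j ≠ (1 : Fin 3)), ![U1, U4, U5] j) ≤ U1 ⊔ U5 := by
          apply iSup_le; intro j; apply iSup_le; intro hj
          fin_cases j
          · exact le_sup_left
          · exact absurd rfl hj
          · exact le_sup_right
        exact (key_disj U4 U1 U5 flip14 ortho45).mono_right hle
      · have hle : (⨆ j, ⨆ (_ : j ≠ (2 : Fin 3)), ![U1, U4, U5] j) ≤ U1 ⊔ U4 := by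
          apply iSup_le; intro j; apply iSup_le; intro hj
          fin_cases j
          · exact le_sup_left
          · exact le_sup_right
          · exact absurd rfl hj
        exact (key_disj U5 U1 U4 flip15 flip45).mono_right hle
    · rw [eq_top_iff, ← eV_span]
      apply Submodule.span_le.2
      rintro _ ⟨i, rfl⟩
      have l0 := le_iSup (![U1, U4, U5] : Fin 3 → Submodule ℚ (Fin 10 → ℚ)) (0 : Fin 3)
      have l1 := le_iSup (![U1, U4, U5] : Fin 3 → Submodule ℚ (Fin 10 → ℚ)) (1 : Fin 3)
      have l2 := le_iSup (![U1, U4, U5] : Fin 3 → Submodule ℚ (Fin 10 → ℚ)) (2 : Fin 3)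
      fin_cases i
      · exact l0 (Submodule.subset_span rfl)
      · exact l1 (genU4 1)
      · exact l1 (genU4 2)
      · exact l1 (genU4 3)
      · exact l1 (genU4 4)
      · exact l2 (hamMem 0)
      · exact l2 (hamMem 1)
      · exact l2 (hamMem 2)
      · exact l2 (hamMem 3)
      · exact l2 (hamMem 4)
  · -- orthogonal complement of 𝟙
    intro x
    constructor
    · intro hx
      have hxtop : x ∈ U1 ⊔ (U4 ⊔ U5) := hsup ▸ Submodule.mem_top
      obtain ⟨y, hy, z, hz, hyz⟩ := Submodule.mem_sup.1 hxtop
      obtain ⟨c, rfl⟩ := Submodule.mem_span_singleton.1 hy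
      have hzsum : (∑ k : Fin 10, z k) = 0 := sum45 z hz
      have hxsum : (∑ k : Fin 10, x k) = 10 * c := by
        rw [← hyz]
        simp [Finset.sum_add_distrib, hzsum, Finset.sum_const, mul_comm]
      have hc : c = 0 := by
        rw [hx] at hxsum
        linarith
      have hxz : x = z := by
        rw [← hyz, hc]
        simp
      rw [hxz]
      exact hz
    · exact sum45 x
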